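/- arXiv:2103.00525 — 2 statements merged into one kernel-verified Lean document; each statement's English description precedes it below -/
import Mathlib

section
/- Let 4 ≤ l ≤ k with 5 ≤ k. Then the ℂ-vector space dimension of ℂ⟦x,y,z⟧/⟨f, g, M₁, M₂, M₃⟩ equals k + l + 1; that is, the Tjurina number of the space curve singularity FT_{k,l} is k + l + 1. -/
/-- Coefficientwise formal partial derivative ∂f/∂xᵢ of a formal power series. -/
noncomputable def pd (i : Fin 3) (f : MvPowerSeries (Fin 3) ℂ) :
    MvPowerSeries (Fin 3) ℂ :=
  fun α => ((α i : ℂ) + 1) * MvPowerSeries.coeff (α + Finsupp.single i 1) f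

open MvPowerSeries Finsupp
noncomputable section
abbrev R3 : Type := MvPowerSeries (Fin 3) ℂ

def ee (a b c : ℕ) : Fin 3 →₀ ℕ := single 0 a + single 1 b + single 2 c
def mn (a b c : ℕ) : R3 := MvPowerSeries.monomial (ee a b c) 1

lemma ee_apply0 (a b c : ℕ) : ee a b c 0 = a := by simp [ee]
lemma ee_apply1 (a b c : ℕ) : ee a b c 1 = b := by simp [ee, single_apply]
lemma ee_apply2 (a b c : ℕ) : ee a b c 2 = c := by simp [ee, single_apply]

lemma ee_eq_iff {a b c d e f : ℕ} : ee a b c = ee d e f ↔ a = d ∧ b = e ∧ c = f := by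
  constructor
  · intro h
    refine ⟨?_, ?_, ?_⟩
    · simpa [ee_apply0] using DFunLike.congr_fun h 0
    · simpa [ee_apply1] using DFunLike.congr_fun h 1
    · simpa [ee_apply2] using DFunLike.congr_fun h 2
  · rintro ⟨rfl, rfl, rfl⟩; rfl

lemma ee_add (a b c d e f : ℕ) : ee a b c + ee d e f = ee (a+d) (b+e) (c+f) := by
  ext i
  fin_cases i <;> simp [ee, single_apply]

lemma eq_ee (α : Fin 3 →₀ ℕ) : α = ee (α 0) (α 1) (α 2) := by
  ext i
  fin_cases i <;> simp [ee, single_apply]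

lemma ee_le_iff {a b c d e f : ℕ} : ee a b c ≤ ee d e f ↔ a ≤ d ∧ b ≤ e ∧ c ≤ f := by
  rw [Finsupp.le_iff]
  constructor
  · intro h
    refine ⟨?_, ?_, ?_⟩
    · by_cases h0 : a = 0
      · omega
      · have := h 0 (by simp [ee, single_apply]; omega)
        simpa [ee_apply0, ee_apply1, ee_apply2] using this
    · by_cases h0 : b = 0
      · omega
      · have := h 1 (by simp [ee, single_apply]; omega)
        simpa [ee_apply0, ee_apply1, ee_apply2] using this
    · by_cases h0 : c = 0
      · omega
      · have := h 2 (by simp [ee, single_apply]; omega)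
        simpa [ee_apply0, ee_apply1, ee_apply2] using this
  · rintro ⟨h1, h2, h3⟩ i _
    fin_cases i <;> simp [ee_apply0, ee_apply1, ee_apply2, ee, single_apply] <;> omega

lemma coeff_pd (i : Fin 3) (f : R3) (β : Fin 3 →₀ ℕ) :
    MvPowerSeries.coeff β (pd i f) = ((β i : ℂ) + 1) * MvPowerSeries.coeff (β + single i 1) f := rfl

lemma pd_add (i : Fin 3) (u v : R3) : pd i (u + v) = pd i u + pd i v := by
  apply MvPowerSeries.ext; intro β
  simp [coeff_pd, map_add]; ring

lemma pd_smul (i : Fin 3) (r : ℂ) (u : R3) : pd i (r • u) = r • pd i u := by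
  apply MvPowerSeries.ext; intro β
  simp [coeff_pd, MvPowerSeries.coeff_smul]; ring

lemma mn_mul (a b c d e f : ℕ) : mn a b c * mn d e f = mn (a+d) (b+e) (c+f) := by
  simp [mn, monomial_mul_monomial, ee_add]

lemma coeff_mn (α : Fin 3 →₀ ℕ) (a b c : ℕ) :
    MvPowerSeries.coeff α (mn a b c) = if α = ee a b c then 1 else 0 := by
  classical simp [mn, MvPowerSeries.coeff_monomial]

lemma single0_ee (n : ℕ) : (single 0 n : Fin 3 →₀ ℕ) = ee n 0 0 := by simp [ee]
lemma single1_ee (n : ℕ) : (single 1 n : Fin 3 →₀ ℕ) = ee 0 n 0 := by simp [ee]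
lemma single2_ee (n : ℕ) : (single 2 n : Fin 3 →₀ ℕ) = ee 0 0 n := by simp [ee]

-- pd of a scaled monomial
lemma pd0_mn (a b c : ℕ) (r : ℂ) : pd 0 (r • mn (a+1) b c) = (((a:ℂ)+1) * r) • mn a b c := by
  apply MvPowerSeries.ext; intro β
  rw [coeff_pd]
  simp only [MvPowerSeries.coeff_smul, coeff_mn, smul_eq_mul]
  rw [eq_ee β, single0_ee, ee_add, ee_apply0]
  by_cases hb : β 0 = a ∧ β 1 = b ∧ β 2 = c
  · obtain ⟨h1, h2, h3⟩ := hb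
    simp [ee_eq_iff, h1, h2, h3] <;> ring
  · have h' : ¬(β 0 + 1 = a + 1 ∧ β 1 = b ∧ β 2 = c) := by omega
    simp only [ee_eq_iff, add_zero, zero_add]
    rw [if_neg h', if_neg hb]
    ring

lemma pd1_mn (a b c : ℕ) (r : ℂ) : pd 1 (r • mn a (b+1) c) = (((b:ℂ)+1) * r) • mn a b c := by
  apply MvPowerSeries.ext; intro β
  rw [coeff_pd]
  simp only [MvPowerSeries.coeff_smul, coeff_mn, smul_eq_mul]
  rw [eq_ee β, single1_ee, ee_add, ee_apply1]
  by_cases hb : β 0 = a ∧ β 1 = b ∧ β 2 = c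
  · obtain ⟨h1, h2, h3⟩ := hb
    simp [ee_eq_iff, h1, h2, h3] <;> ring
  · have h' : ¬(β 0 = a ∧ β 1 + 1 = b + 1 ∧ β 2 = c) := by omega
    simp only [ee_eq_iff, add_zero, zero_add]
    rw [if_neg h', if_neg hb]
    ring

lemma pd2_mn (a b c : ℕ) (r : ℂ) : pd 2 (r • mn a b (c+1)) = (((c:ℂ)+1) * r) • mn a b c := by
  apply MvPowerSeries.ext; intro β
  rw [coeff_pd]
  simp only [MvPowerSeries.coeff_smul, coeff_mn, smul_eq_mul]
  rw [eq_ee β, single2_ee, ee_add, ee_apply2]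
  by_cases hb : β 0 = a ∧ β 1 = b ∧ β 2 = c
  · obtain ⟨h1, h2, h3⟩ := hb
    simp [ee_eq_iff, h1, h2, h3] <;> ring
  · have h' : ¬(β 0 = a ∧ β 1 = b ∧ β 2 + 1 = c + 1) := by omega
    simp only [ee_eq_iff, add_zero, zero_add]
    rw [if_neg h', if_neg hb]
    ring

lemma pd0_mn_zero (b c : ℕ) (r : ℂ) : pd 0 (r • mn 0 b c) = 0 := by
  apply MvPowerSeries.ext; intro β
  rw [coeff_pd]
  simp only [MvPowerSeries.coeff_smul, coeff_mn, smul_eq_mul, MvPowerSeries.coeff_zero]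
  rw [eq_ee β, single0_ee, ee_add]
  have h' : ¬(β 0 + 1 = 0 ∧ β 1 = b ∧ β 2 = c) := by omega
  simp only [ee_eq_iff, add_zero, zero_add]
  rw [if_neg h']; ring

lemma pd1_mn_zero (a c : ℕ) (r : ℂ) : pd 1 (r • mn a 0 c) = 0 := by
  apply MvPowerSeries.ext; intro β
  rw [coeff_pd]
  simp only [MvPowerSeries.coeff_smul, coeff_mn, smul_eq_mul, MvPowerSeries.coeff_zero]
  rw [eq_ee β, single1_ee, ee_add]
  have h' : ¬(β 0 = a ∧ β 1 + 1 = 0 ∧ β 2 = c) := by omega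
  simp only [ee_eq_iff, add_zero, zero_add]
  rw [if_neg h']; ring

lemma pd2_mn_zero (a b : ℕ) (r : ℂ) : pd 2 (r • mn a b 0) = 0 := by
  apply MvPowerSeries.ext; intro β
  rw [coeff_pd]
  simp only [MvPowerSeries.coeff_smul, coeff_mn, smul_eq_mul, MvPowerSeries.coeff_zero]
  rw [eq_ee β, single2_ee, ee_add]
  have h' : ¬(β 0 = a ∧ β 1 = b ∧ β 2 + 1 = 0) := by omega
  simp only [ee_eq_iff, add_zero, zero_add]
  rw [if_neg h']; ring

lemma pd0_mn' (a a' b c : ℕ) (h : a = a'+1) (r : ℂ) :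
    pd 0 (r • mn a b c) = (((a':ℂ)+1) * r) • mn a' b c := by subst h; exact pd0_mn a' b c r
lemma pd1_mn' (a b b' c : ℕ) (h : b = b'+1) (r : ℂ) :
    pd 1 (r • mn a b c) = (((b':ℂ)+1) * r) • mn a b' c := by subst h; exact pd1_mn a b' c r
lemma pd2_mn' (a b c c' : ℕ) (h : c = c'+1) (r : ℂ) :
    pd 2 (r • mn a b c) = (((c':ℂ)+1) * r) • mn a b c' := by subst h; exact pd2_mn a b c' r

lemma X_eq (i : Fin 3) : (X i : R3) = MvPowerSeries.monomial (single i 1) 1 := rfl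

lemma ee110 : ee 1 1 0 = single 0 1 + single 1 1 := by simp [ee]
lemma ee00c (c : ℕ) : ee 0 0 c = single 2 c := by simp [ee]
lemma ee101 : ee 1 0 1 = single 0 1 + single 2 1 := by simp [ee]
lemma ee012 : ee 0 1 2 = single 1 1 + single 2 2 := by simp [ee]
lemma ee0b0 (b : ℕ) : ee 0 b 0 = single 1 b := by simp [ee]

lemma f_eq (L : ℕ) : (X 0 * X 1 + X 2 ^ (L+3) : R3) = mn 1 1 0 + mn 0 0 (L+3) := by
  unfold mn
  rw [X_pow_eq, X_eq 0, X_eq 1, monomial_mul_monomial, one_mul, ee110, ee00c]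

lemma g_eq (K : ℕ) : (X 0 * X 2 + X 1 * X 2 ^ 2 + X 1 ^ (K+4) : R3)
    = mn 1 0 1 + mn 0 1 2 + mn 0 (K+4) 0 := by
  unfold mn
  rw [X_pow_eq 2 2, X_pow_eq 1 (K+4), X_eq 0, X_eq 1, X_eq 2, monomial_mul_monomial,
    monomial_mul_monomial, one_mul, ee101, ee012, ee0b0]

lemma mn_smul_one (a b c : ℕ) : mn a b c = (1:ℂ) • mn a b c := (one_smul _ _).symm

-- derivatives of f
lemma pdf0 (L : ℕ) : pd 0 (mn 1 1 0 + mn 0 0 (L+3)) = mn 0 1 0 := by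
  rw [pd_add, mn_smul_one 1 1 0, mn_smul_one 0 0 (L+3), pd0_mn' 1 0 1 0 rfl, pd0_mn_zero]
  push_cast; module

lemma pdf1 (L : ℕ) : pd 1 (mn 1 1 0 + mn 0 0 (L+3)) = mn 1 0 0 := by
  rw [pd_add, mn_smul_one 1 1 0, mn_smul_one 0 0 (L+3), pd1_mn' 1 1 0 0 rfl, pd1_mn_zero]
  push_cast; module

lemma pdf2 (L : ℕ) : pd 2 (mn 1 1 0 + mn 0 0 (L+3)) = ((L:ℂ)+3) • mn 0 0 (L+2) := by
  rw [pd_add, mn_smul_one 1 1 0, mn_smul_one 0 0 (L+3), pd2_mn_zero,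
    pd2_mn' 0 0 (L+3) (L+2) rfl]
  push_cast; module

lemma pdg0 (K : ℕ) : pd 0 (mn 1 0 1 + mn 0 1 2 + mn 0 (K+4) 0) = mn 0 0 1 := by
  rw [pd_add, pd_add, mn_smul_one 1 0 1, mn_smul_one 0 1 2, mn_smul_one 0 (K+4) 0,
    pd0_mn' 1 0 0 1 rfl, pd0_mn_zero, pd0_mn_zero]
  push_cast; module

lemma pdg1 (K : ℕ) : pd 1 (mn 1 0 1 + mn 0 1 2 + mn 0 (K+4) 0)
    = mn 0 0 2 + ((K:ℂ)+4) • mn 0 (K+3) 0 := by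
  rw [pd_add, pd_add, mn_smul_one 1 0 1, mn_smul_one 0 1 2, mn_smul_one 0 (K+4) 0,
    pd1_mn_zero, pd1_mn' 0 1 0 2 rfl, pd1_mn' 0 (K+4) (K+3) 0 rfl]
  push_cast; module

lemma pdg2 (K : ℕ) : pd 2 (mn 1 0 1 + mn 0 1 2 + mn 0 (K+4) 0)
    = mn 1 0 0 + (2:ℂ) • mn 0 1 1 := by
  rw [pd_add, pd_add, mn_smul_one 1 0 1, mn_smul_one 0 1 2, mn_smul_one 0 (K+4) 0,
    pd2_mn' 1 0 1 0 rfl, pd2_mn' 0 1 2 1 (by norm_num), pd2_mn_zero]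
  push_cast; module

-- the three minors
lemma M1_eq (K L : ℕ) :
    pd 0 (mn 1 1 0 + mn 0 0 (L+3)) * pd 1 (mn 1 0 1 + mn 0 1 2 + mn 0 (K+4) 0)
      - pd 1 (mn 1 1 0 + mn 0 0 (L+3)) * pd 0 (mn 1 0 1 + mn 0 1 2 + mn 0 (K+4) 0)
    = mn 0 1 2 + ((K:ℂ)+4) • mn 0 (K+4) 0 - mn 1 0 1 := by
  rw [pdf0, pdf1, pdg0, pdg1]
  simp only [mul_add, add_mul, smul_mul_assoc, mul_smul_comm, mn_mul, smul_smul]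
  norm_num [Nat.add_assoc, Nat.add_comm, Nat.add_left_comm]

lemma M2_eq (K L : ℕ) :
    pd 1 (mn 1 1 0 + mn 0 0 (L+3)) * pd 2 (mn 1 0 1 + mn 0 1 2 + mn 0 (K+4) 0)
      - pd 2 (mn 1 1 0 + mn 0 0 (L+3)) * pd 1 (mn 1 0 1 + mn 0 1 2 + mn 0 (K+4) 0)
    = mn 2 0 0 + (2:ℂ) • mn 1 1 1 - ((L:ℂ)+3) • mn 0 0 (L+4)
      - (((L:ℂ)+3) * ((K:ℂ)+4)) • mn 0 (K+3) (L+2) := by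
  rw [pdf1, pdf2, pdg1, pdg2]
  simp only [mul_add, add_mul, smul_mul_assoc, mul_smul_comm, mn_mul, smul_smul]
  try norm_num [Nat.add_assoc, Nat.add_comm, Nat.add_left_comm]
  try module

lemma M3_eq (K L : ℕ) :
    pd 0 (mn 1 1 0 + mn 0 0 (L+3)) * pd 2 (mn 1 0 1 + mn 0 1 2 + mn 0 (K+4) 0)
      - pd 2 (mn 1 1 0 + mn 0 0 (L+3)) * pd 0 (mn 1 0 1 + mn 0 1 2 + mn 0 (K+4) 0)
    = mn 1 1 0 + (2:ℂ) • mn 0 2 1 - ((L:ℂ)+3) • mn 0 0 (L+3) := by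
  rw [pdf0, pdf2, pdg0, pdg2]
  simp only [mul_add, add_mul, smul_mul_assoc, mul_smul_comm, mn_mul, smul_smul]
  try norm_num [Nat.add_assoc, Nat.add_comm, Nat.add_left_comm]
  try module


lemma mn_congr {a b c a' b' c' : ℕ} (h1 : a = a') (h2 : b = b') (h3 : c = c') :
    mn a b c = mn a' b' c' := by subst h1; subst h2; subst h3; rfl

lemma csmul_mem (I : Ideal R3) (r : ℂ) {u : R3} (h : u ∈ I) : r • u ∈ I := by
  rw [Algebra.smul_def]; exact I.mul_mem_left _ h

lemma mul_add_smul (x y z : R3) (r s : ℂ) : x * (r • y + s • z) = r • (x*y) + s • (x*z) := by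
  rw [mul_add, mul_smul_comm, mul_smul_comm]
lemma mul_sub_smul (x y z : R3) (r s : ℂ) : x * (r • y - s • z) = r • (x*y) - s • (x*z) := by
  rw [mul_sub, mul_smul_comm, mul_smul_comm]

lemma ee_sub (a b c d e f : ℕ) : ee a b c - ee d e f = ee (a-d) (b-e) (c-f) := by
  ext i
  fin_cases i <;> simp [Finsupp.tsub_apply, ee, single_apply]

lemma span5 {a b c d e u : R3} (h : u ∈ Ideal.span {a,b,c,d,e}) :
    ∃ p q r s t : R3, u = p*a + (q*b + (r*c + (s*d + t*e))) := by
  rw [Ideal.mem_span_insert] at h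
  obtain ⟨p, z, hz, rfl⟩ := h
  rw [Ideal.mem_span_insert] at hz
  obtain ⟨q, z, hz, rfl⟩ := hz
  rw [Ideal.mem_span_insert] at hz
  obtain ⟨r, z, hz, rfl⟩ := hz
  rw [Ideal.mem_span_insert] at hz
  obtain ⟨s, z, hz, rfl⟩ := hz
  rw [Ideal.mem_span_singleton'] at hz
  obtain ⟨t, rfl⟩ := hz
  exact ⟨p, q, r, s, t, rfl⟩

lemma coeff_mul_mn (h : R3) (α : Fin 3 →₀ ℕ) (a b c : ℕ) :
    MvPowerSeries.coeff α (h * mn a b c)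
      = if ee a b c ≤ α then MvPowerSeries.coeff (α - ee a b c) h else 0 := by
  rw [mn, MvPowerSeries.coeff_mul_monomial]
  split_ifs <;> simp

lemma cmn_neg (h : R3) {d e f a b c : ℕ} (hn : ¬(a ≤ d ∧ b ≤ e ∧ c ≤ f)) :
    MvPowerSeries.coeff (ee d e f) (h * mn a b c) = 0 := by
  rw [coeff_mul_mn, if_neg (fun hc => hn (ee_le_iff.mp hc))]

lemma cmn_pos (h : R3) {d e f a b c : ℕ} (hp : a ≤ d ∧ b ≤ e ∧ c ≤ f) :
    MvPowerSeries.coeff (ee d e f) (h * mn a b c)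
      = MvPowerSeries.coeff (ee (d-a) (e-b) (f-c)) h := by
  rw [coeff_mul_mn, if_pos (ee_le_iff.mpr hp), ee_sub]

lemma ee_le_apply {a b c : ℕ} {β : Fin 3 →₀ ℕ} :
    ee a b c ≤ β ↔ a ≤ β 0 ∧ b ≤ β 1 ∧ c ≤ β 2 := by
  rw [eq_ee β, ee_le_iff, ee_apply0, ee_apply1, ee_apply2]

def dg (α : Fin 3 →₀ ℕ) : ℕ := α 0 + α 1 + α 2

lemma dg_mono {α β : Fin 3 →₀ ℕ} (h : α ≤ β) : dg α ≤ dg β := by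
  rw [Finsupp.le_def] at h
  exact add_le_add (add_le_add (h 0) (h 1)) (h 2)

lemma dg_ee (a b c : ℕ) : dg (ee a b c) = a + b + c := by
  simp [dg, ee_apply0, ee_apply1, ee_apply2]

section
variable (K L : ℕ)

def genF (L : ℕ) : R3 := mn 1 1 0 + mn 0 0 (L+3)
def genG (K : ℕ) : R3 := mn 1 0 1 + mn 0 1 2 + mn 0 (K+4) 0
def genW1 (K : ℕ) : R3 := mn 0 1 2 + ((K:ℂ)+4) • mn 0 (K+4) 0 - mn 1 0 1
def genW2 (K L : ℕ) : R3 := mn 2 0 0 + (2:ℂ) • mn 1 1 1 - ((L:ℂ)+3) • mn 0 0 (L+4)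
      - (((L:ℂ)+3) * ((K:ℂ)+4)) • mn 0 (K+3) (L+2)
def genW3 (L : ℕ) : R3 := mn 1 1 0 + (2:ℂ) • mn 0 2 1 - ((L:ℂ)+3) • mn 0 0 (L+3)

def I5 (K L : ℕ) : Ideal R3 := Ideal.span {genF L, genG K, genW1 K, genW2 K L, genW3 L}

lemma cF (h : R3) (α : Fin 3 →₀ ℕ) : MvPowerSeries.coeff α (h * genF L)
    = MvPowerSeries.coeff α (h * mn 1 1 0) + MvPowerSeries.coeff α (h * mn 0 0 (L+3)) := by
  rw [genF, mul_add, map_add]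

lemma cG (h : R3) (α : Fin 3 →₀ ℕ) : MvPowerSeries.coeff α (h * genG K)
    = MvPowerSeries.coeff α (h * mn 1 0 1) + MvPowerSeries.coeff α (h * mn 0 1 2)
      + MvPowerSeries.coeff α (h * mn 0 (K+4) 0) := by
  rw [genG, mul_add, mul_add, map_add, map_add]

lemma cW1 (h : R3) (α : Fin 3 →₀ ℕ) : MvPowerSeries.coeff α (h * genW1 K)
    = MvPowerSeries.coeff α (h * mn 0 1 2)
      + ((K:ℂ)+4) * MvPowerSeries.coeff α (h * mn 0 (K+4) 0)
      - MvPowerSeries.coeff α (h * mn 1 0 1) := by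
  simp only [genW1, mul_sub, mul_add, mul_smul_comm, map_sub, map_add,
    MvPowerSeries.coeff_smul, smul_eq_mul]

lemma cW2 (h : R3) (α : Fin 3 →₀ ℕ) : MvPowerSeries.coeff α (h * genW2 K L)
    = MvPowerSeries.coeff α (h * mn 2 0 0)
      + 2 * MvPowerSeries.coeff α (h * mn 1 1 1)
      - ((L:ℂ)+3) * MvPowerSeries.coeff α (h * mn 0 0 (L+4))
      - ((L:ℂ)+3) * ((K:ℂ)+4) * MvPowerSeries.coeff α (h * mn 0 (K+3) (L+2)) := by
  simp only [genW2, mul_sub, mul_sub, mul_add, mul_smul_comm, map_sub, map_add,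
    MvPowerSeries.coeff_smul, smul_eq_mul]

lemma cW3 (h : R3) (α : Fin 3 →₀ ℕ) : MvPowerSeries.coeff α (h * genW3 L)
    = MvPowerSeries.coeff α (h * mn 1 1 0)
      + 2 * MvPowerSeries.coeff α (h * mn 0 2 1)
      - ((L:ℂ)+3) * MvPowerSeries.coeff α (h * mn 0 0 (L+3)) := by
  simp only [genW3, mul_sub, mul_add, mul_smul_comm, map_sub, map_add,
    MvPowerSeries.coeff_smul, smul_eq_mul]

lemma vanish_plain (b c : ℕ) (hb : b ≤ K+3) (hc : c ≤ L+2)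
    (h1 : ¬(2 ≤ b ∧ 1 ≤ c)) (h2 : ¬(1 ≤ b ∧ 2 ≤ c)) :
    ∀ u ∈ I5 K L, MvPowerSeries.coeff (ee 0 b c) u = 0 := by
  intro u hu
  obtain ⟨p, q, r, s, t, rfl⟩ := span5 hu
  rw [map_add, map_add, map_add, map_add, cF, cG, cW1, cW2, cW3]
  rw [cmn_neg p (by omega), cmn_neg p (by omega),
    cmn_neg q (by omega), cmn_neg q (by omega), cmn_neg q (by omega),
    cmn_neg r (by omega), cmn_neg r (by omega), cmn_neg r (by omega),
    cmn_neg s (by omega), cmn_neg s (by omega), cmn_neg s (by omega), cmn_neg s (by omega),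
    cmn_neg t (by omega), cmn_neg t (by omega), cmn_neg t (by omega)]
  ring

lemma vanish_x : ∀ u ∈ I5 K L, MvPowerSeries.coeff (ee 1 0 0) u = 0 := by
  intro u hu
  obtain ⟨p, q, r, s, t, rfl⟩ := span5 hu
  rw [map_add, map_add, map_add, map_add, cF, cG, cW1, cW2, cW3]
  rw [cmn_neg p (by omega), cmn_neg p (by omega),
    cmn_neg q (by omega), cmn_neg q (by omega), cmn_neg q (by omega),
    cmn_neg r (by omega), cmn_neg r (by omega), cmn_neg r (by omega),
    cmn_neg s (by omega), cmn_neg s (by omega), cmn_neg s (by omega), cmn_neg s (by omega),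
    cmn_neg t (by omega), cmn_neg t (by omega), cmn_neg t (by omega)]
  ring

lemma vanish_yk : ∀ u ∈ I5 K L,
    MvPowerSeries.coeff (ee 0 (K+4) 0) u
      - (((K:ℂ)+5)/2) * MvPowerSeries.coeff (ee 0 1 2) u
      + (((K:ℂ)+3)/2) * MvPowerSeries.coeff (ee 1 0 1) u = 0 := by
  intro u hu
  obtain ⟨p, q, r, s, t, rfl⟩ := span5 hu
  simp only [map_add, cF, cG, cW1, cW2, cW3]
  -- target ee 0 (K+4) 0
  rw [cmn_neg p (by omega), cmn_neg p (by omega),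
    cmn_neg q (by omega), cmn_neg q (by omega), cmn_pos q (by omega),
    cmn_neg r (by omega), cmn_pos r (by omega), cmn_neg r (by omega),
    cmn_neg s (by omega), cmn_neg s (by omega), cmn_neg s (by omega), cmn_neg s (by omega),
    cmn_neg t (by omega), cmn_neg t (by omega), cmn_neg t (by omega)]
  -- target ee 0 1 2
  rw [cmn_neg p (by omega), cmn_neg p (by omega),
    cmn_neg q (by omega), cmn_pos q (by omega), cmn_neg q (by omega),
    cmn_pos r (by omega), cmn_neg r (by omega), cmn_neg r (by omega),
    cmn_neg s (by omega), cmn_neg s (by omega), cmn_neg s (by omega), cmn_neg s (by omega),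
    cmn_neg t (by omega), cmn_neg t (by omega), cmn_neg t (by omega)]
  -- target ee 1 0 1
  rw [cmn_neg p (by omega), cmn_neg p (by omega),
    cmn_pos q (by omega), cmn_neg q (by omega), cmn_neg q (by omega),
    cmn_neg r (by omega), cmn_neg r (by omega), cmn_pos r (by omega),
    cmn_neg s (by omega), cmn_neg s (by omega), cmn_neg s (by omega), cmn_neg s (by omega),
    cmn_neg t (by omega), cmn_neg t (by omega), cmn_neg t (by omega)]
  norm_num [Nat.sub_self]
  ring

lemma vanish_zl : ∀ u ∈ I5 K L,
    MvPowerSeries.coeff (ee 0 0 (L+3)) u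
      + (((L:ℂ)+4)/2) * MvPowerSeries.coeff (ee 0 2 1) u
      - MvPowerSeries.coeff (ee 1 1 0) u = 0 := by
  intro u hu
  obtain ⟨p, q, r, s, t, rfl⟩ := span5 hu
  simp only [map_add, cF, cG, cW1, cW2, cW3]
  -- target ee 0 0 (L+3)
  rw [cmn_neg p (by omega), cmn_pos p (by omega),
    cmn_neg q (by omega), cmn_neg q (by omega), cmn_neg q (by omega),
    cmn_neg r (by omega), cmn_neg r (by omega), cmn_neg r (by omega),
    cmn_neg s (by omega), cmn_neg s (by omega), cmn_neg s (by omega), cmn_neg s (by omega),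
    cmn_neg t (by omega), cmn_neg t (by omega), cmn_pos t (by omega)]
  -- target ee 0 2 1
  rw [cmn_neg p (by omega), cmn_neg p (by omega),
    cmn_neg q (by omega), cmn_neg q (by omega), cmn_neg q (by omega),
    cmn_neg r (by omega), cmn_neg r (by omega), cmn_neg r (by omega),
    cmn_neg s (by omega), cmn_neg s (by omega), cmn_neg s (by omega), cmn_neg s (by omega),
    cmn_neg t (by omega), cmn_pos t (by omega), cmn_neg t (by omega)]
  -- target ee 1 1 0
  rw [cmn_pos p (by omega), cmn_neg p (by omega),
    cmn_neg q (by omega), cmn_neg q (by omega), cmn_neg q (by omega),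
    cmn_neg r (by omega), cmn_neg r (by omega), cmn_neg r (by omega),
    cmn_neg s (by omega), cmn_neg s (by omega), cmn_neg s (by omega), cmn_neg s (by omega),
    cmn_pos t (by omega), cmn_neg t (by omega), cmn_neg t (by omega)]
  norm_num [Nat.sub_self]
  ring

end

def Bfin (K L : ℕ) : Finset (Fin 3 →₀ ℕ) :=
  ({ee 1 0 0, ee 0 1 1} : Finset (Fin 3 →₀ ℕ)) ∪ (Finset.range (K+5)).image (fun b => ee 0 b 0)
    ∪ (Finset.Icc 1 (L+3)).image (fun c => ee 0 0 c)

def Bset (K L : ℕ) : Set R3 := (fun α => (MvPowerSeries.monomial α (1:ℂ))) '' ↑(Bfin K L)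

lemma mem_Bfin_x (K L : ℕ) : ee 1 0 0 ∈ Bfin K L := by simp [Bfin]
lemma mem_Bfin_yz (K L : ℕ) : ee 0 1 1 ∈ Bfin K L := by simp [Bfin]
lemma mem_Bfin_y (K L b : ℕ) (h : b ≤ K+4) : ee 0 b 0 ∈ Bfin K L := by
  simp only [Bfin, Finset.mem_union, Finset.mem_image, Finset.mem_range]
  exact Or.inl (Or.inr ⟨b, by omega, rfl⟩)
lemma mem_Bfin_z (K L c : ℕ) (h1 : 1 ≤ c) (h2 : c ≤ L+3) : ee 0 0 c ∈ Bfin K L := by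
  simp only [Bfin, Finset.mem_union, Finset.mem_image, Finset.mem_Icc]
  exact Or.inr ⟨c, by omega, rfl⟩


section
variable (K L : ℕ) (I : Ideal R3)
  (hF : mn 1 1 0 + mn 0 0 (L+3) ∈ I)
  (hG : mn 1 0 1 + mn 0 1 2 + mn 0 (K+4) 0 ∈ I)
  (hW1 : mn 0 1 2 + ((K:ℂ)+4) • mn 0 (K+4) 0 - mn 1 0 1 ∈ I)
  (hW2 : mn 2 0 0 + (2:ℂ) • mn 1 1 1 - ((L:ℂ)+3) • mn 0 0 (L+4)
      - (((L:ℂ)+3) * ((K:ℂ)+4)) • mn 0 (K+3) (L+2) ∈ I)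
  (hW3 : mn 1 1 0 + (2:ℂ) • mn 0 2 1 - ((L:ℂ)+3) • mn 0 0 (L+3) ∈ I)

include hG hW1 in
lemma hG2 : (2:ℂ) • mn 1 0 1 - ((K:ℂ)+3) • mn 0 (K+4) 0 ∈ I := by
  have h := I.sub_mem hG hW1
  have e : (mn 1 0 1 + mn 0 1 2 + mn 0 (K+4) 0) -
      (mn 0 1 2 + ((K:ℂ)+4) • mn 0 (K+4) 0 - mn 1 0 1)
      = (2:ℂ) • mn 1 0 1 - ((K:ℂ)+3) • mn 0 (K+4) 0 := by module
  rwa [e] at h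

include hG hW1 in
lemma hG3 : (2:ℂ) • mn 0 1 2 + ((K:ℂ)+5) • mn 0 (K+4) 0 ∈ I := by
  have h := I.add_mem hG hW1
  have e : (mn 1 0 1 + mn 0 1 2 + mn 0 (K+4) 0) +
      (mn 0 1 2 + ((K:ℂ)+4) • mn 0 (K+4) 0 - mn 1 0 1)
      = (2:ℂ) • mn 0 1 2 + ((K:ℂ)+5) • mn 0 (K+4) 0 := by module
  rwa [e] at h

include hF hW3 in
lemma hG4 : (2:ℂ) • mn 0 2 1 - ((L:ℂ)+4) • mn 0 0 (L+3) ∈ I := by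
  have h := I.sub_mem hW3 hF
  have e : (mn 1 1 0 + (2:ℂ) • mn 0 2 1 - ((L:ℂ)+3) • mn 0 0 (L+3)) -
      (mn 1 1 0 + mn 0 0 (L+3))
      = (2:ℂ) • mn 0 2 1 - ((L:ℂ)+4) • mn 0 0 (L+3) := by module
  rwa [e] at h

include hF hG hW1 in
lemma hA : (2:ℂ) • mn 0 0 (L+4) + ((K:ℂ)+3) • mn 0 (K+5) 0 ∈ I := by
  have h1 := I.mul_mem_left (mn 0 0 1) hF
  have h2 := I.mul_mem_left (mn 0 1 0) (hG2 K I hG hW1)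
  have h := I.sub_mem (csmul_mem I 2 h1) h2
  have e : (2:ℂ) • (mn 0 0 1 * (mn 1 1 0 + mn 0 0 (L+3)))
      - mn 0 1 0 * ((2:ℂ) • mn 1 0 1 - ((K:ℂ)+3) • mn 0 (K+4) 0)
      = (2:ℂ) • mn 0 0 (L+4) + ((K:ℂ)+3) • mn 0 (K+5) 0 := by
    simp only [mul_add, add_mul, mul_sub, smul_mul_assoc, mul_smul_comm, smul_smul, mn_mul]
    norm_num [Nat.add_assoc, Nat.add_comm, Nat.add_left_comm]
    try module
  rwa [e] at h

include hF hG hW1 hW3 in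
lemma hB : ((L:ℂ)+4) • mn 0 0 (L+4) + ((K:ℂ)+5) • mn 0 (K+5) 0 ∈ I := by
  have h1 := I.mul_mem_left (mn 0 1 0) (hG3 K I hG hW1)
  have h2 := I.mul_mem_left (mn 0 0 1) (hG4 L I hF hW3)
  have h := I.sub_mem h1 h2
  have e : mn 0 1 0 * ((2:ℂ) • mn 0 1 2 + ((K:ℂ)+5) • mn 0 (K+4) 0)
      - mn 0 0 1 * ((2:ℂ) • mn 0 2 1 - ((L:ℂ)+4) • mn 0 0 (L+3))
      = ((L:ℂ)+4) • mn 0 0 (L+4) + ((K:ℂ)+5) • mn 0 (K+5) 0 := by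
    simp only [mul_add, add_mul, mul_sub, smul_mul_assoc, mul_smul_comm, smul_smul, mn_mul]
    norm_num [Nat.add_assoc, Nat.add_comm, Nat.add_left_comm]
    try module
  rwa [e] at h

include hF hG hW1 hW3 in
lemma hyk : mn 0 (K+5) 0 ∈ I := by
  have hAm := hA K L I hF hG hW1
  have hBm := hB K L I hF hG hW1 hW3
  have h := I.sub_mem (csmul_mem I ((L:ℂ)+4) hAm) (csmul_mem I 2 hBm)
  set d : ℂ := ((L:ℂ)+4) * ((K:ℂ)+3) - 2*((K:ℂ)+5) with hd
  have e : ((L:ℂ)+4) • ((2:ℂ) • mn 0 0 (L+4) + ((K:ℂ)+3) • mn 0 (K+5) 0)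
      - (2:ℂ) • (((L:ℂ)+4) • mn 0 0 (L+4) + ((K:ℂ)+5) • mn 0 (K+5) 0)
      = d • mn 0 (K+5) 0 := by rw [hd]; module
  rw [e] at h
  have hdz : d ≠ 0 := by
    have : d = ((L*K + 3*L + 2*K + 2 : ℕ) : ℂ) := by push_cast [hd]; ring
    rw [this]
    exact Nat.cast_ne_zero.mpr (by positivity)
  have := csmul_mem I d⁻¹ h
  rwa [smul_smul, inv_mul_cancel₀ hdz, one_smul] at this

include hF hG hW1 hW3 in
lemma hzl : mn 0 0 (L+4) ∈ I := by
  have hAm := hA K L I hF hG hW1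
  have hykm := hyk K L I hF hG hW1 hW3
  have h := I.sub_mem hAm (csmul_mem I ((K:ℂ)+3) hykm)
  have e : ((2:ℂ) • mn 0 0 (L+4) + ((K:ℂ)+3) • mn 0 (K+5) 0) - ((K:ℂ)+3) • mn 0 (K+5) 0
      = (2:ℂ) • mn 0 0 (L+4) := by module
  rw [e] at h
  have := csmul_mem I (2:ℂ)⁻¹ h
  rwa [smul_smul, inv_mul_cancel₀ (by norm_num), one_smul] at this

include hF hG hW1 hW3 in
lemma hyGE : ∀ a b c, K+5 ≤ b → mn a b c ∈ I := by
  intro a b c hb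
  obtain ⟨t, rfl⟩ := Nat.exists_eq_add_of_le hb
  have h := I.mul_mem_left (mn a t c) (hyk K L I hF hG hW1 hW3)
  have e : mn (a+0) (t+(K+5)) (c+0) = mn a (K+5+t) c := mn_congr (by omega) (by omega) (by omega)
  rwa [mn_mul, e] at h

include hF hG hW1 hW3 in
lemma hzGE : ∀ a b c, L+4 ≤ c → mn a b c ∈ I := by
  intro a b c hc
  obtain ⟨t, rfl⟩ := Nat.exists_eq_add_of_le hc
  have h := I.mul_mem_left (mn a b t) (hzl K L I hF hG hW1 hW3)
  have e : mn (a+0) (b+0) (t+(L+4)) = mn a b (L+4+t) := mn_congr (by omega) (by omega) (by omega)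
  rwa [mn_mul, e] at h

end

section
variable (K L : ℕ) (I : Ideal R3)
  (hF : mn 1 1 0 + mn 0 0 (L+3) ∈ I)
  (hG3m : (2:ℂ) • mn 0 1 2 + ((K:ℂ)+5) • mn 0 (K+4) 0 ∈ I)
  (hG4m : (2:ℂ) • mn 0 2 1 - ((L:ℂ)+4) • mn 0 0 (L+3) ∈ I)
  (hyGEm : ∀ a b c, K+5 ≤ b → mn a b c ∈ I)
  (hzGEm : ∀ a b c, L+4 ≤ c → mn a b c ∈ I)

include hG3m in
lemma lemA : ∀ q b r, mn 0 (b+1) (2*q+r)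
    - ((-((K:ℂ)+5)/2)^q) • mn 0 (b+1+(K+3)*q) r ∈ I := by
  intro q
  induction q with
  | zero =>
    intro b r
    have e : mn 0 (b+1) (2*0+r) = mn 0 (b+1+(K+3)*0) r := mn_congr rfl (by omega) (by omega)
    rw [pow_zero, one_smul, e, sub_self]
    exact I.zero_mem
  | succ q IH =>
    intro b r
    have hrow := I.mul_mem_left (mn 0 b (2*q+r)) hG3m
    have hIH := IH (b + (K+3)) r
    have comb := I.sub_mem (csmul_mem I ((2:ℂ)⁻¹) hrow) (csmul_mem I (((K:ℂ)+5)/2) hIH)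
    have e1 : mn (0+0) (b+1) (2*q+r+2) = mn 0 (b+1) (2*(q+1)+r) :=
      mn_congr (by omega) rfl (by omega)
    have e2 : mn (0+0) (b+(K+4)) (2*q+r+0) = mn 0 (b+(K+3)+1) (2*q+r) :=
      mn_congr (by omega) (by omega) (by omega)
    have e3 : mn 0 (b+(K+3)+1+(K+3)*q) r = mn 0 (b+1+(K+3)*(q+1)) r :=
      mn_congr rfl (by ring) rfl
    have e : (2:ℂ)⁻¹ • (mn 0 b (2*q+r) * ((2:ℂ) • mn 0 1 2 + ((K:ℂ)+5) • mn 0 (K+4) 0))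
        - (((K:ℂ)+5)/2) • (mn 0 (b+(K+3)+1) (2*q+r)
            - ((-((K:ℂ)+5)/2)^q) • mn 0 (b+(K+3)+1+(K+3)*q) r)
        = mn 0 (b+1) (2*(q+1)+r) - ((-((K:ℂ)+5)/2)^(q+1)) • mn 0 (b+1+(K+3)*(q+1)) r := by
      rw [mul_add_smul, mn_mul, mn_mul, e1, e2, e3, pow_succ]
      module
    rwa [e] at comb

include hF hG3m hG4m hyGEm in
lemma lemD : ∀ m b, 3 ≤ b → K+5 ≤ b + m → mn 0 b 1 ∈ I := by
  intro m
  induction m with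
  | zero =>
    intro b h3 hKb
    exact hyGEm 0 b 1 (by omega)
  | succ m IH =>
    intro b h3 hKb
    by_cases hbK : K+5 ≤ b
    · exact hyGEm 0 b 1 hbK
    · obtain ⟨t, rfl⟩ : ∃ t, b = t+3 := ⟨b-3, by omega⟩
      obtain ⟨q, r, hqr, hr2⟩ : ∃ q r, 2*q+r = L+3 ∧ r < 2 :=
        ⟨(L+3)/2, (L+3)%2, by omega, by omega⟩
      have hq1 : 1 ≤ q := by omega
      have hmul1 : (K+3)*1 ≤ (K+3)*q := Nat.mul_le_mul_left _ hq1
      have hrow := I.mul_mem_left (mn 0 (t+1) 0) hG4m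
      have hAexp := lemA K I hG3m q t r
      have hlast : mn 0 (t+1+(K+3)*q) r ∈ I := by
        interval_cases r
        · have hq2 : 2 ≤ q := by omega
          have hmul2 : (K+3)*2 ≤ (K+3)*q := Nat.mul_le_mul_left _ hq2
          exact hyGEm 0 _ 0 (by omega)
        · exact IH (t+1+(K+3)*q) (by omega) (by omega)
      have comb := I.add_mem (I.add_mem (csmul_mem I ((2:ℂ)⁻¹) hrow)
        (csmul_mem I (((L:ℂ)+4)/2) hAexp))
        (csmul_mem I ((((L:ℂ)+4)/2) * ((-((K:ℂ)+5)/2)^q)) hlast)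
      have e0 : mn 0 (t+1) (2*q+r) = mn 0 (t+1) (L+3) := mn_congr rfl rfl hqr
      have e1 : mn (0+0) (t+1+2) (0+1) = mn 0 (t+3) 1 := mn_congr (by omega) (by omega) (by omega)
      have e2 : mn (0+0) (t+1+0) (0+(L+3)) = mn 0 (t+1) (L+3) :=
        mn_congr (by omega) (by omega) (by omega)
      have e : (2:ℂ)⁻¹ • (mn 0 (t+1) 0 * ((2:ℂ) • mn 0 2 1 - ((L:ℂ)+4) • mn 0 0 (L+3)))
          + (((L:ℂ)+4)/2) • (mn 0 (t+1) (2*q+r)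
              - ((-((K:ℂ)+5)/2)^q) • mn 0 (t+1+(K+3)*q) r)
          + ((((L:ℂ)+4)/2) * ((-((K:ℂ)+5)/2)^q)) • mn 0 (t+1+(K+3)*q) r
          = mn 0 (t+3) 1 := by
        rw [mul_sub_smul, mn_mul, mn_mul, e0, e1, e2]
        module
      rwa [e] at comb

include hF hG3m hG4m hyGEm in
lemma lemD' : ∀ b, 3 ≤ b → mn 0 b 1 ∈ I := fun b h3 =>
  lemD K L I hF hG3m hG4m hyGEm (K+5) b h3 (by omega)

include hF hG3m hG4m hyGEm in
lemma M5 : ∀ b c, 1 ≤ b → 1 ≤ c → 4 ≤ b+c → mn 0 b c ∈ I := by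
  intro b c hb hc h4
  by_cases hc1 : c = 1
  · subst hc1
    exact lemD' K L I hF hG3m hG4m hyGEm b (by omega)
  · have hc2 : 2 ≤ c := by omega
    obtain ⟨q, r, hqr, hr2⟩ : ∃ q r, 2*q+r = c ∧ r < 2 := ⟨c/2, c%2, by omega, by omega⟩
    have hq1 : 1 ≤ q := by omega
    have hmul1 : (K+3)*1 ≤ (K+3)*q := Nat.mul_le_mul_left _ hq1
    obtain ⟨t, rfl⟩ : ∃ t, b = t+1 := ⟨b-1, by omega⟩
    have hAexp := lemA K I hG3m q t r
    have hlast : mn 0 (t+1+(K+3)*q) r ∈ I := by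
      interval_cases r
      · by_cases ht : 1 ≤ t
        · exact hyGEm 0 _ 0 (by omega)
        · have hq2 : 2 ≤ q := by omega
          have hmul2 : (K+3)*2 ≤ (K+3)*q := Nat.mul_le_mul_left _ hq2
          exact hyGEm 0 _ 0 (by omega)
      · exact lemD' K L I hF hG3m hG4m hyGEm _ (by omega)
    have comb := I.add_mem hAexp (csmul_mem I ((-((K:ℂ)+5)/2)^q) hlast)
    have e : (mn 0 (t+1) (2*q+r) - ((-((K:ℂ)+5)/2)^q) • mn 0 (t+1+(K+3)*q) r)
        + ((-((K:ℂ)+5)/2)^q) • mn 0 (t+1+(K+3)*q) r = mn 0 (t+1) c := by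
      rw [sub_add_cancel]
      exact mn_congr rfl rfl hqr
    rwa [e] at comb

end

section
variable (K L : ℕ) (I : Ideal R3)

def WS : Submodule ℂ R3 := (Submodule.restrictScalars ℂ I) ⊔ Submodule.span ℂ (Bset K L)

variable {K L I} in
lemma memI_WS {u : R3} (h : u ∈ I) : u ∈ WS K L I :=
  Submodule.mem_sup_left (by rwa [Submodule.restrictScalars_mem])

variable {K L I} in
lemma memB_WS {α : Fin 3 →₀ ℕ} (h : α ∈ Bfin K L) :
    (MvPowerSeries.monomial α (1:ℂ)) ∈ WS K L I :=
  Submodule.mem_sup_right (Submodule.subset_span ⟨α, h, rfl⟩)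

variable {K L I} in
lemma mnB_WS {a b c : ℕ} (h : ee a b c ∈ Bfin K L) : mn a b c ∈ WS K L I := memB_WS h

variable
  (hF : mn 1 1 0 + mn 0 0 (L+3) ∈ I)
  (hG2m : (2:ℂ) • mn 1 0 1 - ((K:ℂ)+3) • mn 0 (K+4) 0 ∈ I)
  (hG3m : (2:ℂ) • mn 0 1 2 + ((K:ℂ)+5) • mn 0 (K+4) 0 ∈ I)
  (hG4m : (2:ℂ) • mn 0 2 1 - ((L:ℂ)+4) • mn 0 0 (L+3) ∈ I)
  (hW2 : mn 2 0 0 + (2:ℂ) • mn 1 1 1 - ((L:ℂ)+3) • mn 0 0 (L+4)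
      - (((L:ℂ)+3) * ((K:ℂ)+4)) • mn 0 (K+3) (L+2) ∈ I)
  (hyGEm : ∀ a b c, K+5 ≤ b → mn a b c ∈ I)
  (hzGEm : ∀ a b c, L+4 ≤ c → mn a b c ∈ I)
  (hM5m : ∀ b c, 1 ≤ b → 1 ≤ c → 4 ≤ b+c → mn 0 b c ∈ I)

-- x*y^(b+1)*z^c  ≡  - y^b z^(c+L+3)
include hF in
lemma rowF (b c : ℕ) : mn 1 (b+1) c + mn 0 b (c+(L+3)) ∈ I := by
  have h := I.mul_mem_left (mn 0 b c) hF
  have e1 : mn (0+1) (b+1) (c+0) = mn 1 (b+1) c := mn_congr (by omega) rfl (by omega)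
  rwa [mul_add, mn_mul, mn_mul, e1] at h

include hF hzGEm hM5m in
lemma memI_xy (b c : ℕ) (hbc : 1 ≤ b + c) : mn 1 (b+1) c ∈ I := by
  have hrow := rowF L I hF b c
  have h2 : mn 0 b (c+(L+3)) ∈ I := by
    rcases Nat.eq_zero_or_pos b with hb | hb
    · subst hb; exact hzGEm 0 0 (c+(L+3)) (by omega)
    · exact hM5m b (c+(L+3)) hb (by omega) (by omega)
  have := I.sub_mem hrow h2
  rwa [add_sub_cancel_right] at this

include hG2m in
lemma rowG2 (c : ℕ) : (2:ℂ) • mn 1 0 (c+1) - ((K:ℂ)+3) • mn 0 (K+4) c ∈ I := by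
  have h := I.mul_mem_left (mn 0 0 c) hG2m
  have e1 : mn (0+1) (0+0) (c+1) = mn 1 0 (c+1) := mn_congr (by omega) (by omega) rfl
  have e2 : mn (0+0) (0+(K+4)) (c+0) = mn 0 (K+4) c := mn_congr (by omega) (by omega) (by omega)
  rwa [mul_sub_smul, mn_mul, mn_mul, e1, e2] at h

include hG2m hM5m in
lemma memI_xz (c : ℕ) (hc : 1 ≤ c) : mn 1 0 (c+1) ∈ I := by
  have hrow := rowG2 K I hG2m c
  have h2 : mn 0 (K+4) c ∈ I := hM5m (K+4) c (by omega) hc (by omega)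
  have comb := I.add_mem hrow (csmul_mem I ((K:ℂ)+3) h2)
  rw [sub_add_cancel] at comb
  have := csmul_mem I ((2:ℂ)⁻¹) comb
  rwa [smul_smul, inv_mul_cancel₀ (by norm_num), one_smul] at this

include hF hzGEm in
lemma memI_xyz : mn 1 1 1 ∈ I := by
  have hrow := rowF L I hF 0 1
  have h2 : mn 0 0 (1+(L+3)) ∈ I := hzGEm 0 0 _ (by omega)
  have := I.sub_mem hrow h2
  rwa [add_sub_cancel_right] at this

include hF hW2 hzGEm hM5m in
lemma memI_x2 : mn 2 0 0 ∈ I := by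
  have h1 := memI_xyz L I hF hzGEm
  have h2 : mn 0 0 (L+4) ∈ I := hzGEm 0 0 (L+4) (by omega)
  have h3 : mn 0 (K+3) (L+2) ∈ I := hM5m (K+3) (L+2) (by omega) (by omega) (by omega)
  have comb := I.add_mem (I.add_mem (I.add_mem hW2 (csmul_mem I (-(2:ℂ)) h1))
    (csmul_mem I ((L:ℂ)+3) h2)) (csmul_mem I (((L:ℂ)+3) * ((K:ℂ)+4)) h3)
  have e : (mn 2 0 0 + (2:ℂ) • mn 1 1 1 - ((L:ℂ)+3) • mn 0 0 (L+4)
      - (((L:ℂ)+3) * ((K:ℂ)+4)) • mn 0 (K+3) (L+2)) + (-(2:ℂ)) • mn 1 1 1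
      + ((L:ℂ)+3) • mn 0 0 (L+4) + (((L:ℂ)+3) * ((K:ℂ)+4)) • mn 0 (K+3) (L+2)
      = mn 2 0 0 := by module
  rwa [e] at comb

include hF hW2 hzGEm hM5m in
lemma memI_aGE2 : ∀ a b c, mn (a+2) b c ∈ I := by
  intro a b c
  have h := I.mul_mem_left (mn a b c) (memI_x2 K L I hF hW2 hzGEm hM5m)
  have e : mn (a+2) (b+0) (c+0) = mn (a+2) b c := mn_congr rfl (by omega) (by omega)
  rwa [mn_mul, e] at h

-- every monomial of degree K+L+9 lies in I
include hF hG2m hW2 hyGEm hzGEm hM5m in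
lemma memI_degN : ∀ a b c, a+b+c = K+L+9 → mn a b c ∈ I := by
  intro a b c hdeg
  match a, b with
  | (a+2), b => exact memI_aGE2 K L I hF hW2 hzGEm hM5m a b c
  | 1, (b+1) => exact memI_xy L I hF hzGEm hM5m b c (by omega)
  | 1, 0 =>
    obtain ⟨c', rfl⟩ : ∃ c', c = c'+1 := ⟨c-1, by omega⟩
    exact memI_xz K I hG2m hM5m c' (by omega)
  | 0, 0 => exact hzGEm 0 0 c (by omega)
  | 0, (b+1) =>
    rcases Nat.eq_zero_or_pos c with hc | hc
    · subst hc; exact hyGEm 0 (b+1) 0 (by omega)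
    · exact hM5m (b+1) c (by omega) hc (by omega)

-- every monomial lies in WS
include hF hG2m hG3m hG4m hW2 hyGEm hzGEm hM5m in
lemma mn_mem_WS : ∀ a b c, mn a b c ∈ WS K L I := by
  intro a b c
  match a, b with
  | (a+2), b => exact memI_WS (memI_aGE2 K L I hF hW2 hzGEm hM5m a b c)
  | 1, (b+1) =>
    rcases Nat.eq_zero_or_pos (b + c) with hbc | hbc
    · -- x*y : congruent to -z^(L+3)
      obtain ⟨rfl, rfl⟩ : b = 0 ∧ c = 0 := by omega
      have hrow := rowF L I hF 0 0
      have h2 : mn 0 0 (0+(L+3)) ∈ WS K L I := by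
        have e : mn 0 0 (0+(L+3)) = mn 0 0 (L+3) := mn_congr rfl rfl (by omega)
        rw [e]; exact mnB_WS (mem_Bfin_z K L (L+3) (by omega) (by omega))
      have := Submodule.sub_mem _ (memI_WS hrow) h2
      rwa [add_sub_cancel_right] at this
    · exact memI_WS (memI_xy L I hF hzGEm hM5m b c hbc)
  | 1, 0 =>
    match c with
    | 0 => exact mnB_WS (mem_Bfin_x K L)
    | 1 =>
      -- x*z ≡ ((K+3)/2) y^(K+4)
      have hrow := rowG2 K I hG2m 0
      have h2 : mn 0 (K+4) 0 ∈ WS K L I := mnB_WS (mem_Bfin_y K L (K+4) (by omega))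
      have comb := Submodule.add_mem _ (memI_WS hrow) (Submodule.smul_mem _ ((K:ℂ)+3) h2)
      rw [sub_add_cancel] at comb
      have := Submodule.smul_mem _ ((2:ℂ)⁻¹) comb
      rwa [smul_smul, inv_mul_cancel₀ (by norm_num), one_smul] at this
    | (c+2) => exact memI_WS (memI_xz K I hG2m hM5m (c+1) (by omega))
  | 0, 0 =>
    match c with
    | 0 => exact mnB_WS (mem_Bfin_y K L 0 (by omega))
    | (c+1) =>
      rcases Nat.lt_or_ge (c+1) (L+4) with hc | hc
      · exact mnB_WS (mem_Bfin_z K L (c+1) (by omega) (by omega))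
      · exact memI_WS (hzGEm 0 0 (c+1) hc)
  | 0, (b+1) =>
    match c with
    | 0 =>
      rcases Nat.lt_or_ge (b+1) (K+5) with hb | hb
      · exact mnB_WS (mem_Bfin_y K L (b+1) (by omega))
      · exact memI_WS (hyGEm 0 (b+1) 0 hb)
    | (c+1) =>
      rcases Nat.lt_or_ge ((b+1)+(c+1)) 4 with h4 | h4
      · -- (b+1,c+1) ∈ {(1,1),(2,1),(1,2)}
        match b, c with
        | 0, 0 => exact mnB_WS (mem_Bfin_yz K L)
        | 1, 0 =>
          -- y²z = (1/2) G4 + ((L+4)/2) z^(L+3)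
          have h2 : mn 0 0 (L+3) ∈ WS K L I := mnB_WS (mem_Bfin_z K L (L+3) (by omega) (by omega))
          have comb := Submodule.add_mem _
            (Submodule.smul_mem _ ((2:ℂ)⁻¹) (memI_WS (show _ ∈ I from hG4m)))
            (Submodule.smul_mem _ (((L:ℂ)+4)/2) h2)
          have e : (2:ℂ)⁻¹ • ((2:ℂ) • mn 0 2 1 - ((L:ℂ)+4) • mn 0 0 (L+3))
              + (((L:ℂ)+4)/2) • mn 0 0 (L+3) = mn 0 2 1 := by module
          rwa [e] at comb
        | 0, 1 =>
          -- yz² = (1/2) G3 - ((K+5)/2) y^(K+4)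
          have h2 : mn 0 (K+4) 0 ∈ WS K L I := mnB_WS (mem_Bfin_y K L (K+4) (by omega))
          have comb := Submodule.sub_mem _
            (Submodule.smul_mem _ ((2:ℂ)⁻¹) (memI_WS (show _ ∈ I from hG3m)))
            (Submodule.smul_mem _ (((K:ℂ)+5)/2) h2)
          have e : (2:ℂ)⁻¹ • ((2:ℂ) • mn 0 1 2 + ((K:ℂ)+5) • mn 0 (K+4) 0)
              - (((K:ℂ)+5)/2) • mn 0 (K+4) 0 = mn 0 1 2 := by module
          rwa [e] at comb
        | (b+2), c => exact absurd h4 (by omega)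
        | 1, (c+1) => exact absurd h4 (by omega)
        | 0, (c+2) => exact absurd h4 (by omega)
      · exact memI_WS (hM5m (b+1) (c+1) (by omega) (by omega) h4)

end

section
variable (K L : ℕ) (I : Ideal R3) (WSv : Submodule ℂ R3)
variable (hIW : ∀ u : R3, u ∈ I → u ∈ WSv)
  (hmnWS : ∀ a b c : ℕ, mn a b c ∈ WSv)
  (hdegN : ∀ a b c, a+b+c = K+L+9 → mn a b c ∈ I)

def lowP (u : R3) : R3 :=
  ∑ t ∈ (Finset.range (K+L+9) ×ˢ Finset.range (K+L+9) ×ˢ Finset.range (K+L+9)).filter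
      (fun t => t.1 + t.2.1 + t.2.2 < K+L+9),
    (MvPowerSeries.coeff (ee t.1 t.2.1 t.2.2) u) • mn t.1 t.2.1 t.2.2

include hmnWS in
lemma lowP_mem (u : R3) : lowP K L u ∈ WSv :=
  Submodule.sum_mem _ (fun t _ => Submodule.smul_mem _ _ (hmnWS t.1 t.2.1 t.2.2))

lemma coeff_lowP (u : R3) (β : Fin 3 →₀ ℕ) :
    MvPowerSeries.coeff β (lowP K L u)
      = if dg β < K+L+9 then MvPowerSeries.coeff β u else 0 := by
  rw [lowP, map_sum]
  simp only [MvPowerSeries.coeff_smul, smul_eq_mul]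
  by_cases hβ : dg β < K+L+9
  · have hmem : (β 0, β 1, β 2) ∈ (Finset.range (K+L+9) ×ˢ Finset.range (K+L+9)
        ×ˢ Finset.range (K+L+9)).filter (fun t => t.1 + t.2.1 + t.2.2 < K+L+9) := by
      simp only [Finset.mem_filter, Finset.mem_product, Finset.mem_range]
      unfold dg at hβ
      omega
    have huniq : ∀ t ∈ (Finset.range (K+L+9) ×ˢ Finset.range (K+L+9)
        ×ˢ Finset.range (K+L+9)).filter (fun t => t.1 + t.2.1 + t.2.2 < K+L+9),
        t ≠ (β 0, β 1, β 2) →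
        (MvPowerSeries.coeff (ee t.1 t.2.1 t.2.2) u) * MvPowerSeries.coeff β (mn t.1 t.2.1 t.2.2) = 0 := by
      intro t _ ht
      rw [coeff_mn, if_neg, mul_zero]
      intro hc
      apply ht
      rw [eq_ee β, ee_eq_iff] at hc
      obtain ⟨h1, h2, h3⟩ := hc
      obtain ⟨t1, t2, t3⟩ := t
      simp_all
    rw [Finset.sum_eq_single_of_mem (β 0, β 1, β 2) hmem huniq, coeff_mn, if_pos (eq_ee β),
      mul_one, if_pos hβ, ← eq_ee β]
  · rw [if_neg hβ]
    apply Finset.sum_eq_zero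
    intro t ht
    simp only [Finset.mem_filter, Finset.mem_product, Finset.mem_range] at ht
    rw [coeff_mn, if_neg, mul_zero]
    intro hc
    rw [hc, dg_ee] at hβ
    omega

def cc0 (K L : ℕ) (β : Fin 3 →₀ ℕ) : ℕ := min (β 0) (K+L+9)
def cc1 (K L : ℕ) (β : Fin 3 →₀ ℕ) : ℕ := min (β 1) (K+L+9 - cc0 K L β)

def hser (K L : ℕ) (u : R3) (a b : ℕ) : R3 :=
  fun γ =>
    if K+L+9 ≤ dg (γ + ee a b (K+L+9-a-b)) ∧ cc0 K L (γ + ee a b (K+L+9-a-b)) = a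
        ∧ cc1 K L (γ + ee a b (K+L+9-a-b)) = b
    then MvPowerSeries.coeff (γ + ee a b (K+L+9-a-b)) u else 0

lemma coeff_hser (K L : ℕ) (u : R3) (a b : ℕ) (γ : Fin 3 →₀ ℕ) :
    MvPowerSeries.coeff γ (hser K L u a b)
      = if K+L+9 ≤ dg (γ + ee a b (K+L+9-a-b)) ∧ cc0 K L (γ + ee a b (K+L+9-a-b)) = a
          ∧ cc1 K L (γ + ee a b (K+L+9-a-b)) = b
        then MvPowerSeries.coeff (γ + ee a b (K+L+9-a-b)) u else 0 := rfl

def highQ (u : R3) : R3 :=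
  ∑ p ∈ (Finset.range (K+L+10) ×ˢ Finset.range (K+L+10)).filter (fun p => p.1+p.2 ≤ K+L+9),
    mn p.1 p.2 (K+L+9-p.1-p.2) * hser K L u p.1 p.2

include hdegN in
lemma highQ_mem (u : R3) : highQ K L u ∈ I :=
  Submodule.sum_mem _ (fun p hp => by
    simp only [Finset.mem_filter, Finset.mem_product, Finset.mem_range] at hp
    exact Ideal.mul_mem_right _ _ (hdegN p.1 p.2 (K+L+9-p.1-p.2) (by omega)))

lemma coeff_highQ (u : R3) (β : Fin 3 →₀ ℕ) :
    MvPowerSeries.coeff β (highQ K L u)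
      = if K+L+9 ≤ dg β then MvPowerSeries.coeff β u else 0 := by
  rw [highQ, map_sum]
  have key : ∀ p1 p2 : ℕ, p1 + p2 ≤ K+L+9 →
      MvPowerSeries.coeff β (mn p1 p2 (K+L+9-p1-p2) * hser K L u p1 p2)
      = if ee p1 p2 (K+L+9-p1-p2) ≤ β ∧ K+L+9 ≤ dg β ∧ cc0 K L β = p1 ∧ cc1 K L β = p2
        then MvPowerSeries.coeff β u else 0 := by
    intro p1 p2 hp
    rw [mn, MvPowerSeries.coeff_monomial_mul]
    by_cases hle : ee p1 p2 (K+L+9-p1-p2) ≤ β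
    · rw [if_pos hle, coeff_hser, tsub_add_cancel_of_le hle, one_mul]
      by_cases hg : K+L+9 ≤ dg β ∧ cc0 K L β = p1 ∧ cc1 K L β = p2
      · rw [if_pos hg, if_pos ⟨hle, hg⟩]
      · rw [if_neg hg, if_neg (fun hc => hg ⟨hc.2.1, hc.2.2.1, hc.2.2.2⟩)]
    · rw [if_neg hle, if_neg (fun hc => hle hc.1)]
  by_cases hβ : K+L+9 ≤ dg β
  · have hmem : (cc0 K L β, cc1 K L β) ∈ (Finset.range (K+L+10) ×ˢ Finset.range (K+L+10)).filter
        (fun p => p.1+p.2 ≤ K+L+9) := by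
      simp only [Finset.mem_filter, Finset.mem_product, Finset.mem_range]
      simp only [cc0, cc1]
      omega
    have huniq : ∀ p ∈ (Finset.range (K+L+10) ×ˢ Finset.range (K+L+10)).filter
        (fun p => p.1+p.2 ≤ K+L+9), p ≠ (cc0 K L β, cc1 K L β) →
        MvPowerSeries.coeff β (mn p.1 p.2 (K+L+9-p.1-p.2) * hser K L u p.1 p.2) = 0 := by
      rintro ⟨p1, p2⟩ hpm hp
      simp only [Finset.mem_filter, Finset.mem_product, Finset.mem_range] at hpm
      rw [key p1 p2 hpm.2, if_neg]
      rintro ⟨-, -, h1, h2⟩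
      exact hp (by rw [← h1, ← h2])
    rw [Finset.sum_eq_single_of_mem (cc0 K L β, cc1 K L β) hmem huniq]
    have hcond : ee (cc0 K L β) (cc1 K L β) (K+L+9 - cc0 K L β - cc1 K L β) ≤ β := by
      rw [ee_le_apply]
      simp only [cc0, cc1, dg] at *
      omega
    rw [key _ _ (by simp only [cc0, cc1]; omega), if_pos ⟨hcond, hβ, rfl, rfl⟩, if_pos hβ]
  · rw [if_neg hβ]
    apply Finset.sum_eq_zero
    rintro ⟨p1, p2⟩ hpm
    simp only [Finset.mem_filter, Finset.mem_product, Finset.mem_range] at hpm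
    rw [key p1 p2 hpm.2, if_neg]
    rintro ⟨-, hg, -⟩
    exact hβ hg

include hIW hmnWS hdegN in
lemma all_mem_WS (u : R3) : u ∈ WSv := by
  have hsplit : u = lowP K L u + highQ K L u := by
    apply MvPowerSeries.ext
    intro β
    rw [map_add, coeff_lowP, coeff_highQ]
    by_cases hβ : dg β < K+L+9
    · rw [if_pos hβ, if_neg (by omega), add_zero]
    · rw [if_neg hβ, if_pos (by omega), zero_add]
  rw [hsplit]
  exact Submodule.add_mem _ (lowP_mem K L WSv hmnWS u) (hIW _ (highQ_mem K L I hdegN u))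

end

section
variable (K L : ℕ)


lemma Bfin_card : (Bfin K L).card = K+L+10 := by
  rw [Bfin, Finset.card_union_of_disjoint, Finset.card_union_of_disjoint]
  · rw [Finset.card_image_of_injective _ (fun x y hxy => by
        simpa [ee_eq_iff] using hxy),
      Finset.card_image_of_injective _ (fun x y hxy => by
        simpa [ee_eq_iff] using hxy)]
    rw [Finset.card_insert_of_notMem (by simp [ee_eq_iff]), Finset.card_singleton,
      Finset.card_range, Nat.card_Icc]
    omega
  · rw [Finset.disjoint_left]
    intro a ha hb
    simp only [Finset.mem_insert, Finset.mem_singleton] at ha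
    simp only [Finset.mem_image, Finset.mem_range] at hb
    obtain ⟨b, -, hb⟩ := hb
    rcases ha with rfl | rfl <;> rw [ee_eq_iff] at hb <;> omega
  · rw [Finset.disjoint_left]
    intro a ha hc
    simp only [Finset.mem_image, Finset.mem_Icc] at hc
    obtain ⟨c, hc1, hc2⟩ := hc
    simp only [Finset.mem_union, Finset.mem_insert, Finset.mem_singleton,
      Finset.mem_image, Finset.mem_range] at ha
    rcases ha with (rfl | rfl) | ⟨b, -, rfl⟩ <;> rw [ee_eq_iff] at hc2 <;> omega

lemma mem_Bfin_elim {α : Fin 3 →₀ ℕ} (h : α ∈ Bfin K L) :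
    α = ee 1 0 0 ∨ α = ee 0 1 1 ∨ (∃ b, b ≤ K+4 ∧ α = ee 0 b 0)
      ∨ (∃ c, 1 ≤ c ∧ c ≤ L+3 ∧ α = ee 0 0 c) := by
  simp only [Bfin, Finset.mem_union, Finset.mem_insert, Finset.mem_singleton,
    Finset.mem_image, Finset.mem_range, Finset.mem_Icc] at h
  rcases h with ((rfl | rfl) | ⟨b, hb, rfl⟩) | ⟨c, hc, rfl⟩
  · exact Or.inl rfl
  · exact Or.inr (Or.inl rfl)
  · exact Or.inr (Or.inr (Or.inl ⟨b, by omega, rfl⟩))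
  · exact Or.inr (Or.inr (Or.inr ⟨c, by omega, by omega, rfl⟩))

lemma combo_coeff (g : {x // x ∈ Bfin K L} → ℂ) (τ : Fin 3 →₀ ℕ) :
    MvPowerSeries.coeff τ
        (∑ α ∈ (Bfin K L).attach, g α • MvPowerSeries.monomial (α : Fin 3 →₀ ℕ) 1)
      = if h : τ ∈ Bfin K L then g ⟨τ, h⟩ else 0 := by
  classical
  rw [map_sum]
  by_cases h : τ ∈ Bfin K L
  · rw [dif_pos h]
    rw [Finset.sum_eq_single_of_mem ⟨τ, h⟩ (Finset.mem_attach _ _)]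
    · rw [MvPowerSeries.coeff_smul, MvPowerSeries.coeff_monomial, if_pos rfl, mul_one]
    · intro b _ hb
      rw [MvPowerSeries.coeff_smul, MvPowerSeries.coeff_monomial, if_neg, mul_zero]
      intro hc
      exact hb (Subtype.ext hc.symm)
  · rw [dif_neg h]
    apply Finset.sum_eq_zero
    intro b _
    rw [MvPowerSeries.coeff_smul, MvPowerSeries.coeff_monomial, if_neg, mul_zero]
    rintro rfl
    exact h b.2

lemma not_mem_aux {α : Fin 3 →₀ ℕ} (h : α ∈ Bfin K L) :
    α ≠ ee 0 1 2 ∧ α ≠ ee 1 0 1 ∧ α ≠ ee 0 2 1 ∧ α ≠ ee 1 1 0 := by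
  rcases mem_Bfin_elim K L h with rfl | rfl | ⟨b, hb, rfl⟩ | ⟨c, hc1, hc2, rfl⟩ <;>
    refine ⟨?_, ?_, ?_, ?_⟩ <;> rw [Ne, ee_eq_iff] <;> omega

theorem finrank_I5
    (hspan : ∀ u : R3,
      u ∈ (Submodule.restrictScalars ℂ (I5 K L)) ⊔ Submodule.span ℂ (Bset K L)) :
    Module.finrank ℂ (R3 ⧸ I5 K L) = K+L+10 := by
  classical
  set φ := (Ideal.Quotient.mkₐ ℂ (I5 K L)).toLinearMap with hφ
  set v : {x // x ∈ Bfin K L} → (R3 ⧸ I5 K L) :=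
    (fun α => φ (MvPowerSeries.monomial (α : Fin 3 →₀ ℕ) 1)) with hv
  have hli : LinearIndependent ℂ v := by
    rw [Fintype.linearIndependent_iff]
    intro g hg i
    have hsum : φ (∑ α ∈ (Bfin K L).attach, g α • MvPowerSeries.monomial (α : Fin 3 →₀ ℕ) 1)
        = 0 := by
      rw [map_sum]
      simp only [map_smul]
      rw [← Finset.univ_eq_attach]
      exact hg
    set u : R3 := ∑ α ∈ (Bfin K L).attach, g α • MvPowerSeries.monomial (α : Fin 3 →₀ ℕ) 1
      with hu
    have humem : u ∈ I5 K L := by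
      rwa [← Ideal.Quotient.eq_zero_iff_mem]
    obtain ⟨α, hα⟩ := i
    have hgi : ∀ h' : (α : Fin 3 →₀ ℕ) ∈ Bfin K L, g ⟨α, h'⟩ = g ⟨α, hα⟩ := fun _ => rfl
    rcases mem_Bfin_elim K L hα with hc | hc | ⟨b, hb, hc⟩ | ⟨c, hc1, hc2, hc⟩
    · have := vanish_x K L u humem
      rw [combo_coeff] at this
      rw [← hc] at this
      rw [dif_pos hα] at this
      exact this
    · have := vanish_plain K L 1 1 (by omega) (by omega) (by omega) (by omega) u humem
      rw [combo_coeff] at this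
      rw [← hc] at this
      rw [dif_pos hα] at this
      exact this
    · by_cases hbK : b ≤ K+3
      · have := vanish_plain K L b 0 hbK (by omega) (by omega) (by omega) u humem
        rw [combo_coeff] at this
        rw [← hc] at this
        rw [dif_pos hα] at this
        exact this
      · have hb4 : b = K+4 := by omega
        subst hb4
        have hz1 : MvPowerSeries.coeff (ee 0 1 2) u = 0 := by
          rw [combo_coeff, dif_neg]
          intro hmem
          exact (not_mem_aux K L hmem).1 rfl
        have hz2 : MvPowerSeries.coeff (ee 1 0 1) u = 0 := by
          rw [combo_coeff, dif_neg]
          intro hmem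
          exact (not_mem_aux K L hmem).2.1 rfl
        have := vanish_yk K L u humem
        rw [hz1, hz2, combo_coeff] at this
        rw [← hc] at this
        rw [dif_pos hα] at this
        have : g ⟨α, hα⟩ - ((K:ℂ)+5)/2 * 0 + ((K:ℂ)+3)/2 * 0 = 0 := this
        simpa using this
    · by_cases hcL : c ≤ L+2
      · have := vanish_plain K L 0 c (by omega) hcL (by omega) (by omega) u humem
        rw [combo_coeff] at this
        rw [← hc] at this
        rw [dif_pos hα] at this
        exact this
      · have hc4 : c = L+3 := by omega
        subst hc4
        have hz1 : MvPowerSeries.coeff (ee 0 2 1) u = 0 := by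
          rw [combo_coeff, dif_neg]
          intro hmem
          exact (not_mem_aux K L hmem).2.2.1 rfl
        have hz2 : MvPowerSeries.coeff (ee 1 1 0) u = 0 := by
          rw [combo_coeff, dif_neg]
          intro hmem
          exact (not_mem_aux K L hmem).2.2.2 rfl
        have := vanish_zl K L u humem
        rw [hz1, hz2, combo_coeff] at this
        rw [← hc] at this
        rw [dif_pos hα] at this
        have : g ⟨α, hα⟩ + ((L:ℂ)+4)/2 * 0 - 0 = 0 := this
        simpa using this
  have hrange : Set.range v = (fun x => φ x) '' (Bset K L) := by
    ext x
    constructor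
    · rintro ⟨⟨α, hα⟩, rfl⟩
      exact ⟨MvPowerSeries.monomial α 1, ⟨α, hα, rfl⟩, rfl⟩
    · rintro ⟨y, ⟨α, hα, rfl⟩, rfl⟩
      exact ⟨⟨α, hα⟩, rfl⟩
  have hsp : ⊤ ≤ Submodule.span ℂ (Set.range v) := by
    intro x _
    obtain ⟨w, rfl⟩ := Ideal.Quotient.mk_surjective x
    obtain ⟨i, hi, s, hs, rfl⟩ := Submodule.mem_sup.mp (hspan w)
    have hφi : φ i = 0 := by
      rw [Submodule.restrictScalars_mem] at hi
      exact Ideal.Quotient.eq_zero_iff_mem.mpr hi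
    have : Ideal.Quotient.mk (I5 K L) (i + s) = φ i + φ s := rfl
    rw [this, hφi, zero_add]
    rw [hrange]
    rw [← Submodule.map_span]
    exact Submodule.mem_map_of_mem hs
  have hb : Module.Basis {x // x ∈ Bfin K L} ℂ (R3 ⧸ I5 K L) := Module.Basis.mk hli hsp
  rw [Module.finrank_eq_card_basis hb, Fintype.card_coe, Bfin_card]


end
end

open MvPowerSeries in
/-- Pfister–Schönemann: the Tjurina number of the space curve singularity FT_{k,l}
(f = xy + z^{l−1}, g = xz + yz² + y^{k−1}, 4 ≤ l ≤ k, 5 ≤ k) equals k + l + 1. -/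
theorem tjurina_FT (k l : ℕ) (hl : 4 ≤ l) (hlk : l ≤ k) (hk : 5 ≤ k)
    (f g M₁ M₂ M₃ : MvPowerSeries (Fin 3) ℂ)
    (hf : f = X 0 * X 1 + X 2 ^ (l - 1))
    (hg : g = X 0 * X 2 + X 1 * X 2 ^ 2 + X 1 ^ (k - 1))
    (hM₁ : M₁ = pd 0 f * pd 1 g - pd 1 f * pd 0 g)
    (hM₂ : M₂ = pd 1 f * pd 2 g - pd 2 f * pd 1 g)
    (hM₃ : M₃ = pd 0 f * pd 2 g - pd 2 f * pd 0 g) :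
    Module.finrank ℂ
      (MvPowerSeries (Fin 3) ℂ ⧸ Ideal.span {f, g, M₁, M₂, M₃}) = k + l + 1 := by
  obtain ⟨K, rfl⟩ : ∃ K, k = K+5 := ⟨k-5, by omega⟩
  obtain ⟨L, rfl⟩ : ∃ L, l = L+4 := ⟨l-4, by omega⟩
  rw [show (L+4) - 1 = L+3 from by omega] at hf
  rw [show (K+5) - 1 = K+4 from by omega] at hg
  rw [f_eq] at hf
  rw [g_eq] at hg
  subst hf
  subst hg
  rw [M1_eq] at hM₁
  rw [M2_eq] at hM₂
  rw [M3_eq] at hM₃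
  subst hM₁
  subst hM₂
  subst hM₃
  show Module.finrank ℂ (R3 ⧸ I5 K L) = K+5+(L+4)+1
  have hFI : mn 1 1 0 + mn 0 0 (L+3) ∈ I5 K L :=
    Ideal.subset_span (Set.mem_insert _ _)
  have hGI : mn 1 0 1 + mn 0 1 2 + mn 0 (K+4) 0 ∈ I5 K L :=
    Ideal.subset_span (Set.mem_insert_of_mem _ (Set.mem_insert _ _))
  have hW1I : mn 0 1 2 + ((K:ℂ)+4) • mn 0 (K+4) 0 - mn 1 0 1 ∈ I5 K L :=
    Ideal.subset_span (Set.mem_insert_of_mem _ (Set.mem_insert_of_mem _ (Set.mem_insert _ _)))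
  have hW2I : mn 2 0 0 + (2:ℂ) • mn 1 1 1 - ((L:ℂ)+3) • mn 0 0 (L+4)
      - (((L:ℂ)+3) * ((K:ℂ)+4)) • mn 0 (K+3) (L+2) ∈ I5 K L :=
    Ideal.subset_span (Set.mem_insert_of_mem _ (Set.mem_insert_of_mem _
      (Set.mem_insert_of_mem _ (Set.mem_insert _ _))))
  have hW3I : mn 1 1 0 + (2:ℂ) • mn 0 2 1 - ((L:ℂ)+3) • mn 0 0 (L+3) ∈ I5 K L :=
    Ideal.subset_span (Set.mem_insert_of_mem _ (Set.mem_insert_of_mem _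
      (Set.mem_insert_of_mem _ (Set.mem_insert_of_mem _ rfl))))
  have hG2m := hG2 (K := K) (I := I5 K L) (hG := hGI) (hW1 := hW1I)
  have hG3m := hG3 (K := K) (I := I5 K L) (hG := hGI) (hW1 := hW1I)
  have hG4m := hG4 (L := L) (I := I5 K L) (hF := hFI) (hW3 := hW3I)
  have hyGEm := hyGE (K := K) (L := L) (I := I5 K L) (hF := hFI) (hG := hGI)
    (hW1 := hW1I) (hW3 := hW3I)
  have hzGEm := hzGE (K := K) (L := L) (I := I5 K L) (hF := hFI) (hG := hGI)
    (hW1 := hW1I) (hW3 := hW3I)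
  have hM5m := M5 (K := K) (L := L) (I := I5 K L) (hF := hFI) (hG3m := hG3m)
    (hG4m := hG4m) (hyGEm := hyGEm)
  have hdegNm := memI_degN (K := K) (L := L) (I := I5 K L) (hF := hFI) (hG2m := hG2m)
    (hW2 := hW2I) (hyGEm := hyGEm) (hzGEm := hzGEm) (hM5m := hM5m)
  have hmnWSm := mn_mem_WS (K := K) (L := L) (I := I5 K L) (hF := hFI) (hG2m := hG2m)
    (hG3m := hG3m) (hG4m := hG4m) (hW2 := hW2I) (hyGEm := hyGEm) (hzGEm := hzGEm)
    (hM5m := hM5m)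
  have hspan : ∀ u : R3,
      u ∈ (Submodule.restrictScalars ℂ (I5 K L)) ⊔ Submodule.span ℂ (Bset K L) :=
    fun u => all_mem_WS K L (I5 K L) (WS K L (I5 K L)) (fun _ h => memI_WS h) hmnWSm hdegNm u
  rw [finrank_I5 K L hspan]
  omega
end

section
/- Let 4 ≤ l ≤ k with 5 ≤ k, f = x·y + z^(l−1) and g = x·z + y·z² + y^(k−1) in ℂ⟦x,y,z⟧. Then for every h in the ideal ⟨f,g⟩ there exist a, b, c ∈ ⟨f,g⟩ such that h = ∂a/∂z + ∂b/∂x + ∂c/∂y. (This is Reiffen's condition ⟨f,g⟩·Ω³ ⊆ d(⟨f,g⟩·Ω²) for exactness of the Poincaré complex of the curve X_{lk} defined by f = g = 0.) -/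
open MvPowerSeries Finsupp

lemma pd_coeff (i : Fin 3) (s : MvPowerSeries (Fin 3) ℂ) (α : Fin 3 →₀ ℕ) :
    MvPowerSeries.coeff α (pd i s)
      = ((α i : ℂ) + 1) * MvPowerSeries.coeff (α + Finsupp.single i 1) s := rfl

lemma coeff_addX (i : Fin 3) (s : MvPowerSeries (Fin 3) ℂ) (α : Fin 3 →₀ ℕ) :
    MvPowerSeries.coeff (α + Finsupp.single i 1) (X i * s)
      = MvPowerSeries.coeff α s := by
  rw [X_def, add_comm α, coeff_add_monomial_mul, one_mul]

lemma pd_X_mul_coeff (i : Fin 3) (s : MvPowerSeries (Fin 3) ℂ) (α : Fin 3 →₀ ℕ) :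
    MvPowerSeries.coeff α (pd i (X i * s))
      = ((α i : ℂ) + 1) * MvPowerSeries.coeff α s := by
  rw [pd_coeff, coeff_addX]

/-- Scaled series: coefficients of `p` divided by the weighted Euler factor. -/
noncomputable def eulerScale (w0 w1 w2 N : ℕ) (p : MvPowerSeries (Fin 3) ℂ) :
    MvPowerSeries (Fin 3) ℂ :=
  fun β => MvPowerSeries.coeff β p / ((w0 * β 0 + w1 * β 1 + w2 * β 2 + N : ℕ) : ℂ)

/-- Key Euler identity: if `F` is quasi-homogeneous of degree `d` for weights
`(w0,w1,w2)`, then the weighted Euler operator applied to `P * F`, with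
`P = eulerScale ... p`, recovers `p * F` coefficientwise. -/
lemma key (w0 w1 w2 d : ℕ) (hN : 0 < w0 + w1 + w2 + d)
    (F p : MvPowerSeries (Fin 3) ℂ)
    (hF : ∀ γ : Fin 3 →₀ ℕ, MvPowerSeries.coeff γ F ≠ 0 →
      w0 * γ 0 + w1 * γ 1 + w2 * γ 2 = d)
    (α : Fin 3 →₀ ℕ) :
    ((w0 : ℂ) * ((α 0 : ℂ) + 1) + (w1 : ℂ) * ((α 1 : ℂ) + 1)
        + (w2 : ℂ) * ((α 2 : ℂ) + 1)) *
      MvPowerSeries.coeff α (eulerScale w0 w1 w2 (w0 + w1 + w2 + d) p * F)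
      = MvPowerSeries.coeff α (p * F) := by
  classical
  rw [coeff_mul, coeff_mul, Finset.mul_sum]
  apply Finset.sum_congr rfl
  rintro ⟨β, γ⟩ hmem
  rw [Finset.HasAntidiagonal.mem_antidiagonal] at hmem
  by_cases hγ : MvPowerSeries.coeff γ F = 0
  · rw [hγ, mul_zero, mul_zero, mul_zero]
  · have hw := hF γ hγ
    have hβ0 : α 0 = β 0 + γ 0 := by rw [← hmem]; simp
    have hβ1 : α 1 = β 1 + γ 1 := by rw [← hmem]; simp
    have hβ2 : α 2 = β 2 + γ 2 := by rw [← hmem]; simp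
    have hM : ((w0 : ℂ) * ((α 0 : ℂ) + 1) + (w1 : ℂ) * ((α 1 : ℂ) + 1)
        + (w2 : ℂ) * ((α 2 : ℂ) + 1))
        = ((w0 * β 0 + w1 * β 1 + w2 * β 2 + (w0 + w1 + w2 + d) : ℕ) : ℂ) := by
      have : w0 * α 0 + w1 * α 1 + w2 * α 2 + (w0 + w1 + w2)
          = w0 * β 0 + w1 * β 1 + w2 * β 2 + (w0 + w1 + w2 + d) := by
        rw [hβ0, hβ1, hβ2, ← hw]; ring
      push_cast [← this]
      ring
    have hne : ((w0 * β 0 + w1 * β 1 + w2 * β 2 + (w0 + w1 + w2 + d) : ℕ) : ℂ) ≠ 0 :=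
      Nat.cast_ne_zero.mpr (by omega)
    have hP : MvPowerSeries.coeff β (eulerScale w0 w1 w2 (w0 + w1 + w2 + d) p)
        = MvPowerSeries.coeff β p
          / ((w0 * β 0 + w1 * β 1 + w2 * β 2 + (w0 + w1 + w2 + d) : ℕ) : ℂ) := rfl
    rw [hP, hM, ← mul_assoc, mul_div_cancel₀ _ hne]

/-- Reiffen's first condition ⟨f,g⟩·Ω³ ⊆ d(⟨f,g⟩·Ω²) for the space curve singularity
FT_{k,l} (f = xy + z^{l−1}, g = xz + yz² + y^{k−1}, 4 ≤ l ≤ k, 5 ≤ k):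
every h ∈ ⟨f,g⟩ is of the form ∂a/∂z + ∂b/∂x + ∂c/∂y with a, b, c ∈ ⟨f,g⟩. -/
theorem FT_reiffen_first_condition (k l : ℕ) (hl : 4 ≤ l) (hlk : l ≤ k) (hk : 5 ≤ k)
    (f g : MvPowerSeries (Fin 3) ℂ)
    (hf : f = X 0 * X 1 + X 2 ^ (l - 1))
    (hg : g = X 0 * X 2 + X 1 * X 2 ^ 2 + X 1 ^ (k - 1)) :
    ∀ h ∈ Ideal.span {f, g}, ∃ a ∈ Ideal.span {f, g}, ∃ b ∈ Ideal.span {f, g},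
      ∃ c ∈ Ideal.span {f, g}, h = pd 2 a + pd 0 b + pd 1 c := by
  classical
  intro h hmem
  rw [Ideal.mem_span_pair] at hmem
  obtain ⟨p, q, hpq⟩ := hmem
  -- quasi-homogeneity of f for weights (l-1, 0, 1), degree l-1
  have hFf : ∀ γ : Fin 3 →₀ ℕ, MvPowerSeries.coeff γ f ≠ 0 →
      (l - 1) * γ 0 + 0 * γ 1 + 1 * γ 2 = l - 1 := by
    intro γ hγ
    rw [hf, map_add] at hγ
    have : MvPowerSeries.coeff γ (X 0 * X 1 : MvPowerSeries (Fin 3) ℂ) ≠ 0 ∨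
        MvPowerSeries.coeff γ (X 2 ^ (l - 1) : MvPowerSeries (Fin 3) ℂ) ≠ 0 := by
      by_contra hc
      push_neg at hc
      rw [hc.1, hc.2, add_zero] at hγ
      exact hγ rfl
    rcases this with h1 | h1
    · rw [X_def, X_def, monomial_mul_monomial, coeff_monomial] at h1
      split_ifs at h1 with he
      · subst he; simp
      · exact absurd rfl h1
    · rw [X_pow_eq, coeff_monomial] at h1
      split_ifs at h1 with he
      · subst he; simp
      · exact absurd rfl h1
  -- quasi-homogeneity of g for weights (k, 2, k-2), degree 2k-2
  have hFg : ∀ γ : Fin 3 →₀ ℕ, MvPowerSeries.coeff γ g ≠ 0 →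
      k * γ 0 + 2 * γ 1 + (k - 2) * γ 2 = 2 * k - 2 := by
    intro γ hγ
    rw [hg, map_add, map_add] at hγ
    have : MvPowerSeries.coeff γ (X 0 * X 2 : MvPowerSeries (Fin 3) ℂ) ≠ 0 ∨
        MvPowerSeries.coeff γ (X 1 * X 2 ^ 2 : MvPowerSeries (Fin 3) ℂ) ≠ 0 ∨
        MvPowerSeries.coeff γ (X 1 ^ (k - 1) : MvPowerSeries (Fin 3) ℂ) ≠ 0 := by
      by_contra hc
      push_neg at hc
      rw [hc.1, hc.2.1, hc.2.2, add_zero, add_zero] at hγ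
      exact hγ rfl
    rcases this with h1 | h1 | h1
    · rw [X_def, X_def, monomial_mul_monomial, coeff_monomial] at h1
      split_ifs at h1 with he
      · subst he; simp; omega
      · exact absurd rfl h1
    · rw [X_def, X_pow_eq, monomial_mul_monomial, coeff_monomial] at h1
      split_ifs at h1 with he
      · subst he; simp; omega
      · exact absurd rfl h1
    · rw [X_pow_eq, coeff_monomial] at h1
      split_ifs at h1 with he
      · subst he; simp; omega
      · exact absurd rfl h1
  set P : MvPowerSeries (Fin 3) ℂ :=
    eulerScale (l - 1) 0 1 ((l - 1) + 0 + 1 + (l - 1)) p with hP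
  set Q : MvPowerSeries (Fin 3) ℂ :=
    eulerScale k 2 (k - 2) (k + 2 + (k - 2) + (2 * k - 2)) q with hQ
  refine ⟨X 2 * (P * f) + ((k - 2 : ℕ) : ℂ) • (X 2 * (Q * g)), ?_,
    ((l - 1 : ℕ) : ℂ) • (X 0 * (P * f)) + ((k : ℕ) : ℂ) • (X 0 * (Q * g)), ?_,
    (2 : ℂ) • (X 1 * (Q * g)), ?_, ?_⟩
  · apply Ideal.add_mem
    · rw [← mul_assoc]
      exact Ideal.mul_mem_left _ _ (Ideal.subset_span (Set.mem_insert _ _))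
    · apply Submodule.smul_of_tower_mem
      rw [← mul_assoc]
      exact Ideal.mul_mem_left _ _ (Ideal.subset_span (Set.mem_insert_of_mem _ rfl))
  · apply Ideal.add_mem
    · apply Submodule.smul_of_tower_mem
      rw [← mul_assoc]
      exact Ideal.mul_mem_left _ _ (Ideal.subset_span (Set.mem_insert _ _))
    · apply Submodule.smul_of_tower_mem
      rw [← mul_assoc]
      exact Ideal.mul_mem_left _ _ (Ideal.subset_span (Set.mem_insert_of_mem _ rfl))
  · apply Submodule.smul_of_tower_mem
    rw [← mul_assoc]
    exact Ideal.mul_mem_left _ _ (Ideal.subset_span (Set.mem_insert_of_mem _ rfl))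
  · apply MvPowerSeries.ext
    intro α
    have hkf := key (l - 1) 0 1 (l - 1) (by omega) f p hFf α
    have hkg := key k 2 (k - 2) (2 * k - 2) (by omega) g q hFg α
    rw [← hP] at hkf
    rw [← hQ] at hkg
    rw [← hpq]
    rw [map_add, map_add, map_add]
    rw [pd_coeff, pd_coeff, pd_coeff]
    rw [map_add, map_add]
    rw [coeff_smul, coeff_smul, coeff_smul, coeff_smul]
    rw [coeff_addX, coeff_addX, coeff_addX, coeff_addX, coeff_addX]
    rw [← hkf, ← hkg]
    simp only [Nat.cast_zero, Nat.cast_one, Nat.cast_ofNat]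
    ring
end
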